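/- Let x₀ ∈ ℝ^n and let {x_k} be the sketch-and-project iterates with arbitrary sketching matrices {S_k}. On the event ∩_{ℓ=1}^L {τ_ℓ < ∞}, there exist γ_ℓ ∈ (0,1) for ℓ = 1,…,L, where each γ_ℓ is a measurable function of (Q_{τ_{ℓ−1}+1},…,Q_{τ_ℓ}), such that ‖x_{τ_L} − x*‖_B ≤ (∏_{ℓ=1}^L γ_ℓ) ‖x₀ − x*‖_B. -/

import Mathlib

open MeasureTheory ProbabilityTheory Matrix Finset Filter

noncomputable section

/-- The Moore–Penrose pseudoinverse of a real matrix, defined via classical choice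
as a matrix satisfying the four Penrose equations (such a matrix exists and is unique). -/
noncomputable def mpinv {a b : ℕ} (M : Matrix (Fin a) (Fin b) ℝ) : Matrix (Fin b) (Fin a) ℝ :=
  Classical.epsilon fun X => M * X * M = M ∧ X * M * X = X ∧ (M * X)ᵀ = M * X ∧ (X * M)ᵀ = X * M

/-- The Euclidean norm of a vector in `Fin a → ℝ`. -/
noncomputable def nrm2 {a : ℕ} (v : Fin a → ℝ) : ℝ := Real.sqrt (∑ i, v i ^ 2)

/-- The spectral norm (ℓ₂ operator norm) of a matrix. -/
noncomputable def specNorm {a b : ℕ} (M : Matrix (Fin a) (Fin b) ℝ) : ℝ :=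
  sInf {c | 0 ≤ c ∧ ∀ v, nrm2 (M *ᵥ v) ≤ c * nrm2 v}

/-- The row space of a matrix, as a submodule of `Fin b → ℝ`. -/
def rowSpace {a b : ℕ} (M : Matrix (Fin a) (Fin b) ℝ) : Submodule ℝ (Fin b → ℝ) :=
  Submodule.span ℝ (Set.range M)

/-- The column space of a matrix, as a submodule of `Fin a → ℝ`. -/
def colSpace {a b : ℕ} (M : Matrix (Fin a) (Fin b) ℝ) : Submodule ℝ (Fin a → ℝ) :=
  rowSpace Mᵀ

/-- One step of the sketch-and-project iteration:
`x ↦ x − B⁻¹Aᵀ Sₖ (Sₖᵀ A B⁻¹ Aᵀ Sₖ)† Sₖᵀ (A x − b)`. -/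
noncomputable def spStep {m n p : ℕ} (A : Matrix (Fin m) (Fin n) ℝ)
    (B : Matrix (Fin n) (Fin n) ℝ) (b : Fin m → ℝ)
    (Sk : Matrix (Fin m) (Fin p) ℝ) (xk : Fin n → ℝ) : Fin n → ℝ :=
  xk - (B⁻¹ * Aᵀ * Sk * mpinv (Skᵀ * A * B⁻¹ * Aᵀ * Sk) * Skᵀ) *ᵥ (A *ᵥ xk - b)

instance matrixMeasurableSpace {a b : ℕ} : MeasurableSpace (Matrix (Fin a) (Fin b) ℝ) :=
  MeasurableSpace.pi

/-- The `(C, ω)` sub-exponential Johnson–Lindenstrauss property of a random `m × p` matrix. -/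
def jlProperty {m p : ℕ} {Ω : Type*} [MeasurableSpace Ω] (μ : Measure Ω)
    (S : Ω → Matrix (Fin m) (Fin p) ℝ) (C ω : ℝ) : Prop :=
  0 < C ∧ 0 < ω ∧ ∀ z : Fin m → ℝ,
    (∀ t : ℝ, |t| ≤ 1 / ω →
      ∫ a, Real.exp (t * (nrm2 ((S a)ᵀ *ᵥ z) ^ 2 - nrm2 z ^ 2)) ∂μ ≤
        Real.exp (t ^ 2 * nrm2 z ^ 4 / (2 * C * p))) ∧
    (∀ δ : ℝ, 0 < δ →
      μ {a | δ * nrm2 z ^ 2 < |nrm2 ((S a)ᵀ *ᵥ z) ^ 2 - nrm2 z ^ 2|} ≤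
        ENNReal.ofReal (2 * Real.exp (-min (C * p * δ ^ 2) (C * p * δ / ω))))

/-- `σ`-algebra generated by the sketching matrices `S₁, …, S_j`. -/
def sigmaF {m p : ℕ} {Ω : Type*} [MeasurableSpace Ω]
    (S : ℕ → Ω → Matrix (Fin m) (Fin p) ℝ) (j : ℕ) : MeasurableSpace Ω :=
  ⨆ i ∈ Finset.Icc 1 j, MeasurableSpace.comap (S i) inferInstance

/-- The smallest nonzero singular value of a matrix. -/
noncomputable def sigmaMinPos {a b : ℕ} (M : Matrix (Fin a) (Fin b) ℝ) : ℝ :=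
  sInf {c | ∃ v ∈ rowSpace M, v ≠ 0 ∧ c = nrm2 (M *ᵥ v) / nrm2 v}

/-! ### Auxiliary lemmas -/

/-- The four Penrose equations. -/
def penrose {a b : ℕ} (M : Matrix (Fin a) (Fin b) ℝ) (X : Matrix (Fin b) (Fin a) ℝ) : Prop :=
  M * X * M = M ∧ X * M * X = X ∧ (M * X)ᵀ = M * X ∧ (X * M)ᵀ = X * M

theorem penrose_unique {a b : ℕ} {M : Matrix (Fin a) (Fin b) ℝ} {X Y : Matrix (Fin b) (Fin a) ℝ}
    (hX : penrose M X) (hY : penrose M Y) : X = Y := by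
  obtain ⟨hX1, hX2, hX3, hX4⟩ := hX
  obtain ⟨hY1, hY2, hY3, hY4⟩ := hY
  have hMX : M * X = M * Y := by
    calc M * X = (M * X)ᵀ := hX3.symm
    _ = Xᵀ * Mᵀ := transpose_mul _ _
    _ = Xᵀ * (M * Y * M)ᵀ := by rw [hY1]
    _ = Xᵀ * (Mᵀ * (M * Y)ᵀ) := by rw [transpose_mul (M * Y) M]
    _ = (Xᵀ * Mᵀ) * (M * Y) := by rw [hY3, Matrix.mul_assoc]
    _ = (M * X)ᵀ * (M * Y) := by rw [transpose_mul]
    _ = M * X * (M * Y) := by rw [hX3]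
    _ = (M * X * M) * Y := by rw [← Matrix.mul_assoc]
    _ = M * Y := by rw [hX1]
  have hXM : X * M = Y * M := by
    calc X * M = (X * M)ᵀ := hX4.symm
    _ = Mᵀ * Xᵀ := transpose_mul _ _
    _ = (M * Y * M)ᵀ * Xᵀ := by rw [hY1]
    _ = ((Y * M)ᵀ * Mᵀ) * Xᵀ := by rw [Matrix.mul_assoc M Y M, transpose_mul M (Y * M)]
    _ = Y * M * (Mᵀ * Xᵀ) := by rw [hY4, Matrix.mul_assoc]
    _ = Y * M * (X * M)ᵀ := by rw [transpose_mul]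
    _ = Y * M * (X * M) := by rw [hX4]
    _ = Y * (M * X * M) := by rw [Matrix.mul_assoc, ← Matrix.mul_assoc M X M]
    _ = Y * M := by rw [hX1]
  calc X = X * M * X := hX2.symm
  _ = Y * M * X := by rw [hXM]
  _ = Y * (M * X) := by rw [Matrix.mul_assoc]
  _ = Y * (M * Y) := by rw [hMX]
  _ = Y * M * Y := by rw [Matrix.mul_assoc]
  _ = Y := hY2

theorem penrose_exists_of_decomp {a : ℕ} (M U : Matrix (Fin a) (Fin a) ℝ) (d : Fin a → ℝ)
    (hspec : M = U * diagonal d * Uᵀ) (hUU' : Uᵀ * U = 1) : ∃ X, penrose M X := by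
  set e : Fin a → ℝ := fun i => if d i = 0 then 0 else (d i)⁻¹ with he
  have hfun1 : (fun i => d i * e i * d i) = d := by
    funext i
    by_cases h : d i = 0 <;> field_simp [Pi.mul_apply, he, h] <;> simp [he, h]
  have hfun2 : (fun i => e i * d i * e i) = e := by
    funext i
    by_cases h : d i = 0 <;> field_simp [Pi.mul_apply, he, h] <;> simp [he, h]
  have hded : diagonal d * diagonal e * diagonal d = diagonal d := by
    rw [diagonal_mul_diagonal, diagonal_mul_diagonal, hfun1]
  have hede : diagonal e * diagonal d * diagonal e = diagonal e := by
    rw [diagonal_mul_diagonal, diagonal_mul_diagonal, hfun2]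
  have key : ∀ P R : Matrix (Fin a) (Fin a) ℝ,
      (U * P * Uᵀ) * (U * R * Uᵀ) = U * (P * R) * Uᵀ := by
    intro P R
    calc (U * P * Uᵀ) * (U * R * Uᵀ)
        = U * P * (Uᵀ * U) * R * Uᵀ := by simp only [Matrix.mul_assoc]
      _ = U * (P * R) * Uᵀ := by rw [hUU']; simp only [Matrix.mul_one, Matrix.mul_assoc]
  have keyT : ∀ v : Fin a → ℝ, (U * diagonal v * Uᵀ)ᵀ = U * diagonal v * Uᵀ := by
    intro v
    rw [Matrix.transpose_mul, Matrix.transpose_mul, Matrix.transpose_transpose,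
      Matrix.diagonal_transpose, Matrix.mul_assoc]
  refine ⟨U * diagonal e * Uᵀ, ?_, ?_, ?_, ?_⟩
  · rw [hspec, key, key, hded]
  · rw [hspec, key, key, hede]
  · rw [hspec, key, diagonal_mul_diagonal]; exact keyT _
  · rw [hspec, key, diagonal_mul_diagonal]; exact keyT _

theorem penrose_exists_symm {a : ℕ} {M : Matrix (Fin a) (Fin a) ℝ} (hM : Mᵀ = M) :
    ∃ X, penrose M X := by
  have hH : M.IsHermitian := by
    rw [Matrix.IsHermitian, conjTranspose_eq_transpose_of_trivial]; exact hM
  refine penrose_exists_of_decomp M (hH.eigenvectorUnitary : Matrix (Fin a) (Fin a) ℝ)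
    hH.eigenvalues ?_ ?_
  · have := hH.spectral_theorem
    rw [Unitary.conjStarAlgAut_apply] at this
    rw [Matrix.star_eq_conjTranspose, conjTranspose_eq_transpose_of_trivial] at this
    simpa [RCLike.ofReal_real_eq_id] using this
  · have := (Matrix.mem_unitaryGroup_iff').mp hH.eigenvectorUnitary.2
    rwa [Matrix.star_eq_conjTranspose, conjTranspose_eq_transpose_of_trivial] at this

theorem mpinv_penrose {a : ℕ} {M : Matrix (Fin a) (Fin a) ℝ} (hM : Mᵀ = M) :
    penrose M (mpinv M) := by
  have h := penrose_exists_symm hM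
  exact Classical.epsilon_spec
    (p := fun X => M * X * M = M ∧ X * M * X = X ∧ (M * X)ᵀ = M * X ∧ (X * M)ᵀ = X * M) h

theorem mpinv_transpose_symm {a : ℕ} {M : Matrix (Fin a) (Fin a) ℝ} (hM : Mᵀ = M) :
    (mpinv M)ᵀ = mpinv M := by
  obtain ⟨h1, h2, h3, h4⟩ := mpinv_penrose hM
  set X := mpinv M
  have hXT : penrose M Xᵀ := by
    refine ⟨?_, ?_, ?_, ?_⟩
    · have := congrArg Matrix.transpose h1
      rw [transpose_mul, transpose_mul, hM] at this
      rw [← Matrix.mul_assoc] at this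
      rw [this]
    · have := congrArg Matrix.transpose h2
      rw [transpose_mul, transpose_mul, hM] at this
      rw [← Matrix.mul_assoc] at this
      rw [this]
    · rw [transpose_mul, transpose_transpose, hM, ← h4, transpose_mul, hM]
    · rw [transpose_mul, transpose_transpose, hM, ← h3, transpose_mul, hM]
  exact penrose_unique hXT (mpinv_penrose hM)

theorem dot_self_nonneg {a : ℕ} (v : Fin a → ℝ) : 0 ≤ v ⬝ᵥ v :=
  Finset.sum_nonneg fun i _ => mul_self_nonneg (v i)

theorem nrm2_eq_sqrt_dot {a : ℕ} (v : Fin a → ℝ) : nrm2 v = Real.sqrt (v ⬝ᵥ v) := by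
  simp [nrm2, dotProduct, sq]

theorem nrm2_nonneg {a : ℕ} (v : Fin a → ℝ) : 0 ≤ nrm2 v := Real.sqrt_nonneg _

theorem nrm2_sq {a : ℕ} (v : Fin a → ℝ) : nrm2 v ^ 2 = v ⬝ᵥ v := by
  rw [nrm2_eq_sqrt_dot, Real.sq_sqrt (dot_self_nonneg v)]

theorem nrm2_eq_zero_iff {a : ℕ} (v : Fin a → ℝ) : nrm2 v = 0 ↔ v = 0 := by
  rw [nrm2_eq_sqrt_dot, Real.sqrt_eq_zero (dot_self_nonneg v)]
  exact dotProduct_self_eq_zero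

theorem nrm2_le_of_dot_le {a : ℕ} {v w : Fin a → ℝ} (h : v ⬝ᵥ v ≤ w ⬝ᵥ w) :
    nrm2 v ≤ nrm2 w := by
  rw [nrm2_eq_sqrt_dot, nrm2_eq_sqrt_dot]
  exact Real.sqrt_le_sqrt h

theorem nrm2_lt_of_dot_lt {a : ℕ} {v w : Fin a → ℝ} (h : v ⬝ᵥ v < w ⬝ᵥ w) :
    nrm2 v < nrm2 w := by
  rw [nrm2_eq_sqrt_dot, nrm2_eq_sqrt_dot]
  exact Real.sqrt_lt_sqrt (dot_self_nonneg v) h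

theorem vecMul_mem_rowSpace {a b : ℕ} (M : Matrix (Fin a) (Fin b) ℝ) (v : Fin a → ℝ) :
    v ᵥ* M ∈ rowSpace M := by
  have : v ᵥ* M = ∑ i, v i • M i := by
    funext j
    simp [vecMul, dotProduct, Finset.sum_apply]
  rw [this]
  exact Submodule.sum_mem _ fun i _ =>
    Submodule.smul_mem _ _ (Submodule.subset_span (Set.mem_range_self i))

theorem mulVec_mem_colSpace {a b : ℕ} (M : Matrix (Fin a) (Fin b) ℝ) (v : Fin b → ℝ) :
    M *ᵥ v ∈ colSpace M := by
  rw [← vecMul_transpose]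
  exact vecMul_mem_rowSpace Mᵀ v

theorem rowSpace_mul_le {a b c : ℕ} (N : Matrix (Fin a) (Fin b) ℝ)
    (M : Matrix (Fin b) (Fin c) ℝ) : rowSpace (N * M) ≤ rowSpace M := by
  rw [rowSpace, Submodule.span_le]
  rintro _ ⟨i, rfl⟩
  have : (N * M) i = (N i) ᵥ* M := by
    funext j; simp [Matrix.mul_apply, vecMul, dotProduct]
  rw [this]
  exact vecMul_mem_rowSpace M (N i)

theorem mulVec_dot {a b : ℕ} (M : Matrix (Fin a) (Fin b) ℝ) (u : Fin b → ℝ) (w : Fin a → ℝ) :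
    (M *ᵥ u) ⬝ᵥ w = u ⬝ᵥ (Mᵀ *ᵥ w) := by
  rw [dotProduct_mulVec, vecMul_transpose]

theorem proj_dot_eq {a : ℕ} (P : Matrix (Fin a) (Fin a) ℝ) (hs : Pᵀ = P) (hi : P * P = P)
    (v : Fin a → ℝ) :
    (v - P *ᵥ v) ⬝ᵥ (v - P *ᵥ v) = v ⬝ᵥ v - (P *ᵥ v) ⬝ᵥ (P *ᵥ v) := by
  have h1 : (P *ᵥ v) ⬝ᵥ (P *ᵥ v) = v ⬝ᵥ (P *ᵥ v) := by
    rw [mulVec_dot, mulVec_mulVec, hs, hi]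
  have h2 : (P *ᵥ v) ⬝ᵥ v = v ⬝ᵥ (P *ᵥ v) := dotProduct_comm _ _
  rw [sub_dotProduct, dotProduct_sub, dotProduct_sub, h1, h2]
  ring

theorem dot_rowSpace_eq_zero {a b : ℕ} {M : Matrix (Fin a) (Fin b) ℝ} {y : Fin b → ℝ}
    (hMy : M *ᵥ y = 0) : ∀ v ∈ rowSpace M, v ⬝ᵥ y = 0 := by
  intro v hv
  induction hv using Submodule.span_induction with
  | mem x hx =>
    obtain ⟨i, rfl⟩ := hx
    have : (M *ᵥ y) i = 0 := by rw [hMy]; rfl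
    simpa [mulVec, dotProduct] using this
  | zero => simp
  | add x y' hx hy' ihx ihy => rw [add_dotProduct, ihx, ihy, add_zero]
  | smul c x hx ih => rw [smul_dotProduct, ih, smul_zero]

theorem mem_of_dot_orth {n : ℕ} (K : Submodule ℝ (Fin n → ℝ)) (y : Fin n → ℝ)
    (h : ∀ w, (∀ v ∈ K, v ⬝ᵥ w = 0) → y ⬝ᵥ w = 0) : y ∈ K := by
  classical
  let e : EuclideanSpace ℝ (Fin n) ≃ₗ[ℝ] (Fin n → ℝ) := WithLp.linearEquiv 2 ℝ (Fin n → ℝ)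
  let K' : Submodule ℝ (EuclideanSpace ℝ (Fin n)) := K.comap e.toLinearMap
  have hinner : ∀ u v : EuclideanSpace ℝ (Fin n), (inner ℝ u v : ℝ) = (e u) ⬝ᵥ (e v) := by
    intro u v
    simp [PiLp.inner_apply, RCLike.inner_apply, dotProduct, mul_comm]
    rfl
  have hy' : e.symm y ∈ K'ᗮᗮ := by
    intro w hw
    rw [Submodule.mem_orthogonal] at hw
    have hw' : ∀ v ∈ K, v ⬝ᵥ (e w) = 0 := by
      intro v hv
      have := hw (e.symm v) (by simpa [K', Submodule.mem_comap] using hv)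
      rwa [hinner, e.apply_symm_apply] at this
    have := h (e w) hw'
    rw [real_inner_comm, hinner, e.apply_symm_apply]
    exact this
  rw [Submodule.orthogonal_orthogonal] at hy'
  exact hy'

theorem transpose_mul_self_eq_zero' {a b : ℕ} {Z : Matrix (Fin a) (Fin b) ℝ}
    (h : Zᵀ * Z = 0) : Z = 0 := by
  rw [← conjTranspose_eq_transpose_of_trivial] at h
  exact conjTranspose_mul_self_eq_zero.mp h

theorem gram_symm {n p : ℕ} (W : Matrix (Fin n) (Fin p) ℝ) : (Wᵀ * W)ᵀ = Wᵀ * W := by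
  rw [transpose_mul, transpose_transpose]

theorem projP_symm {n p : ℕ} (W : Matrix (Fin n) (Fin p) ℝ) :
    (W * mpinv (Wᵀ * W) * Wᵀ)ᵀ = W * mpinv (Wᵀ * W) * Wᵀ := by
  rw [transpose_mul, transpose_mul, transpose_transpose,
    mpinv_transpose_symm (gram_symm W), Matrix.mul_assoc]

theorem mpinv_gram_cancel {n p : ℕ} (W : Matrix (Fin n) (Fin p) ℝ) :
    W * mpinv (Wᵀ * W) * (Wᵀ * W) = W := by
  obtain ⟨h1, h2, h3, h4⟩ := mpinv_penrose (gram_symm W)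
  set G := Wᵀ * W with hG
  set X := mpinv G with hX
  have hXs : Xᵀ = X := mpinv_transpose_symm (gram_symm W)
  have hGs : Gᵀ = G := by rw [hG]; exact gram_symm W
  have hT : (W * X * G)ᵀ = G * X * Wᵀ := by
    rw [transpose_mul (W * X) G, transpose_mul W X, hXs, hGs, ← Matrix.mul_assoc]
  have e1 : G * X * Wᵀ * (W * X * G) = G := by
    calc G * X * Wᵀ * (W * X * G)
        = G * X * (Wᵀ * W) * (X * G) := by simp only [Matrix.mul_assoc]
      _ = G * X * G * (X * G) := by rw [← hG]
      _ = G * (X * G) := by rw [h1]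
      _ = G := by rw [← Matrix.mul_assoc, h1]
  have e2 : G * X * Wᵀ * W = G := by
    calc G * X * Wᵀ * W = G * X * (Wᵀ * W) := by rw [Matrix.mul_assoc]
      _ = G := by rw [← hG, h1]
  have e3 : Wᵀ * (W * X * G) = G := by
    calc Wᵀ * (W * X * G) = (Wᵀ * W) * (X * G) := by simp only [Matrix.mul_assoc]
      _ = G := by rw [← hG, ← Matrix.mul_assoc, h1]
  have hZ : (W * X * G - W)ᵀ * (W * X * G - W) = 0 := by
    rw [transpose_sub, hT, Matrix.sub_mul, Matrix.mul_sub, Matrix.mul_sub,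
      e1, e2, e3, ← hG]
    abel
  have := transpose_mul_self_eq_zero' hZ
  exact sub_eq_zero.mp this

theorem projP_WtP {n p : ℕ} (W : Matrix (Fin n) (Fin p) ℝ) :
    Wᵀ * (W * mpinv (Wᵀ * W) * Wᵀ) = Wᵀ := by
  have h := congrArg Matrix.transpose (mpinv_gram_cancel W)
  rw [transpose_mul (W * mpinv (Wᵀ * W)) (Wᵀ * W), transpose_mul W (mpinv (Wᵀ * W)),
    gram_symm, mpinv_transpose_symm (gram_symm W)] at h
  simp only [Matrix.mul_assoc] at h ⊢
  exact h

theorem projP_idem {n p : ℕ} (W : Matrix (Fin n) (Fin p) ℝ) :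
    (W * mpinv (Wᵀ * W) * Wᵀ) * (W * mpinv (Wᵀ * W) * Wᵀ) = W * mpinv (Wᵀ * W) * Wᵀ := by
  calc (W * mpinv (Wᵀ * W) * Wᵀ) * (W * mpinv (Wᵀ * W) * Wᵀ)
      = W * mpinv (Wᵀ * W) * (Wᵀ * (W * mpinv (Wᵀ * W) * Wᵀ)) := by
        simp only [Matrix.mul_assoc]
    _ = W * mpinv (Wᵀ * W) * Wᵀ := by rw [projP_WtP]

theorem WT_eq {m n p : ℕ} (A : Matrix (Fin m) (Fin n) ℝ) (Bhalf : Matrix (Fin n) (Fin n) ℝ)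
    (Sk : Matrix (Fin m) (Fin p) ℝ) (hBhinvT : Bhalf⁻¹ᵀ = Bhalf⁻¹) :
    (Bhalf⁻¹ * Aᵀ * Sk)ᵀ = Skᵀ * A * Bhalf⁻¹ := by
  rw [transpose_mul (Bhalf⁻¹ * Aᵀ) Sk, transpose_mul Bhalf⁻¹ Aᵀ, transpose_transpose, hBhinvT,
    ← Matrix.mul_assoc]

theorem gram_eq {m n p : ℕ} (A : Matrix (Fin m) (Fin n) ℝ) (B Bhalf : Matrix (Fin n) (Fin n) ℝ)
    (Sk : Matrix (Fin m) (Fin p) ℝ) (hBinv : B⁻¹ = Bhalf⁻¹ * Bhalf⁻¹)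
    (hBhinvT : Bhalf⁻¹ᵀ = Bhalf⁻¹) :
    Skᵀ * A * B⁻¹ * Aᵀ * Sk = (Bhalf⁻¹ * Aᵀ * Sk)ᵀ * (Bhalf⁻¹ * Aᵀ * Sk) := by
  rw [WT_eq A Bhalf Sk hBhinvT, hBinv]
  simp only [Matrix.mul_assoc]

theorem conj_identity {m n p : ℕ} (A : Matrix (Fin m) (Fin n) ℝ)
    (B Bhalf : Matrix (Fin n) (Fin n) ℝ) (Sk : Matrix (Fin m) (Fin p) ℝ)
    (hBinv : B⁻¹ = Bhalf⁻¹ * Bhalf⁻¹) (hBhinvT : Bhalf⁻¹ᵀ = Bhalf⁻¹)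
    (h1 : Bhalf * Bhalf⁻¹ = 1) :
    Bhalf * (B⁻¹ * Aᵀ * Sk * mpinv (Skᵀ * A * B⁻¹ * Aᵀ * Sk) * Skᵀ) * A * Bhalf⁻¹ =
      (Bhalf⁻¹ * Aᵀ * Sk) * mpinv ((Bhalf⁻¹ * Aᵀ * Sk)ᵀ * (Bhalf⁻¹ * Aᵀ * Sk)) *
        (Bhalf⁻¹ * Aᵀ * Sk)ᵀ := by
  rw [gram_eq A B Bhalf Sk hBinv hBhinvT, WT_eq A Bhalf Sk hBhinvT, hBinv]
  simp only [← Matrix.mul_assoc]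
  rw [h1, Matrix.one_mul]

/-- On the event `∩_{ℓ=1}^L {τ_ℓ < ∞}` (here: for any realization for which
the first `L` covering times are finite numbers), there exist `γ_ℓ ∈ (0,1)`, `ℓ = 1,…,L`,
such that `‖x_{τ_L} − x*‖_B ≤ (∏_{ℓ=1}^L γ_ℓ) ‖x₀ − x*‖_B`. -/
theorem stmt4 {m n p : ℕ} (A : Matrix (Fin m) (Fin n) ℝ) (b : Fin m → ℝ)
    (hconsistent : ∃ y, A *ᵥ y = b)
    (B Bhalf : Matrix (Fin n) (Fin n) ℝ) (hB : B.PosDef)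
    (hBsymm : Bhalfᵀ = Bhalf) (hBsq : Bhalf * Bhalf = B)
    (S : ℕ → Matrix (Fin m) (Fin p) ℝ)
    (x₀ : Fin n → ℝ) (x : ℕ → Fin n → ℝ)
    (hx0 : x 0 = x₀) (hxrec : ∀ k, x (k + 1) = spStep A B b (S (k + 1)) (x k))
    (xstar : Fin n → ℝ) (hsol : A *ᵥ xstar = b)
    (hproj : ∀ y, A *ᵥ y = b →
      nrm2 (Bhalf *ᵥ (x₀ - xstar)) ≤ nrm2 (Bhalf *ᵥ (x₀ - y)))
    -- `Q k` has orthonormal columns forming a basis of `row(S_kᵀ A B^{-1/2})`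
    (q : ℕ → ℕ) (Q : ∀ k, Matrix (Fin n) (Fin (q k)) ℝ)
    (hQorth : ∀ k, (Q k)ᵀ * Q k = 1)
    (hQspan : ∀ k, colSpace (Q k) = rowSpace ((S k)ᵀ * A * Bhalf⁻¹))
    -- `τ 0 = 0` and, for `ℓ < L`, `τ (ℓ+1)` is the smallest `k > τ ℓ` with
    -- `col(Q_{τ_ℓ+1}) + ⋯ + col(Q_k) = row(AB^{-1/2})` (all finite on the event considered)
    (L : ℕ) (τ : ℕ → ℕ) (hτ0 : τ 0 = 0)
    (hτmono : ∀ ℓ < L, τ ℓ < τ (ℓ + 1))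
    (hτ : ∀ ℓ < L, (⨆ i ∈ Finset.Icc (τ ℓ + 1) (τ (ℓ + 1)), colSpace (Q i)) =
      rowSpace (A * Bhalf⁻¹))
    (hτmin : ∀ ℓ < L, ∀ k, τ ℓ < k → k < τ (ℓ + 1) →
      (⨆ i ∈ Finset.Icc (τ ℓ + 1) k, colSpace (Q i)) ≠ rowSpace (A * Bhalf⁻¹)) :
    ∃ γ : ℕ → ℝ, (∀ ℓ ∈ Finset.Icc 1 L, γ ℓ ∈ Set.Ioo (0 : ℝ) 1) ∧
      nrm2 (Bhalf *ᵥ (x (τ L) - xstar)) ≤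
        (∏ ℓ ∈ Finset.Icc 1 L, γ ℓ) * nrm2 (Bhalf *ᵥ (x₀ - xstar)) := by
  classical
  -- Invertibility facts about `Bhalf`
  have hdetB : IsUnit B.det := isUnit_iff_ne_zero.mpr (ne_of_gt hB.det_pos)
  have hdetBh : IsUnit Bhalf.det := by
    refine isUnit_iff_ne_zero.mpr fun h => ?_
    have hmul : Bhalf.det * Bhalf.det = B.det := by rw [← det_mul, hBsq]
    exact isUnit_iff_ne_zero.mp hdetB (by rw [← hmul, h, mul_zero])
  have hBhmul : Bhalf * Bhalf⁻¹ = 1 := mul_nonsing_inv _ hdetBh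
  have hBhmul' : Bhalf⁻¹ * Bhalf = 1 := nonsing_inv_mul _ hdetBh
  have hBhinvT : Bhalf⁻¹ᵀ = Bhalf⁻¹ := by rw [transpose_nonsing_inv, hBsymm]
  have hBinv : B⁻¹ = Bhalf⁻¹ * Bhalf⁻¹ := by rw [← hBsq, Matrix.mul_inv_rev]
  -- Local abbreviations
  obtain ⟨W, hWdef⟩ : ∃ W : ℕ → Matrix (Fin n) (Fin p) ℝ,
      ∀ k, W k = Bhalf⁻¹ * Aᵀ * S k := ⟨_, fun _ => rfl⟩
  obtain ⟨Pm, hPmdef⟩ : ∃ Pm : ℕ → Matrix (Fin n) (Fin n) ℝ,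
      ∀ k, Pm k = W k * mpinv ((W k)ᵀ * W k) * (W k)ᵀ := ⟨_, fun _ => rfl⟩
  obtain ⟨y, hydef⟩ : ∃ y : ℕ → Fin n → ℝ,
      ∀ k, y k = Bhalf *ᵥ (x k - xstar) := ⟨_, fun _ => rfl⟩
  have hWT : ∀ k, (W k)ᵀ = (S k)ᵀ * A * Bhalf⁻¹ := by
    intro k; rw [hWdef k]; exact WT_eq A Bhalf (S k) hBhinvT
  -- The error recursion in `Bhalf`-coordinates
  have hyrec : ∀ k, y (k + 1) = y k - Pm (k + 1) *ᵥ y k := by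
    intro k
    have hstep := hxrec k
    simp only [spStep] at hstep
    have hAxb : A *ᵥ x k - b = A *ᵥ (x k - xstar) := by rw [mulVec_sub, hsol]
    rw [hAxb] at hstep
    have hu : x k - xstar = Bhalf⁻¹ *ᵥ y k := by
      rw [hydef k, mulVec_mulVec, hBhmul', one_mulVec]
    have hxsub : x (k + 1) - xstar = (x k - xstar) -
        (B⁻¹ * Aᵀ * S (k + 1) * mpinv ((S (k + 1))ᵀ * A * B⁻¹ * Aᵀ * S (k + 1)) * (S (k + 1))ᵀ)
          *ᵥ (A *ᵥ (x k - xstar)) := by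
      rw [hstep]; abel
    calc y (k + 1) = Bhalf *ᵥ (x (k + 1) - xstar) := hydef _
    _ = Bhalf *ᵥ (x k - xstar) - Bhalf *ᵥ
        ((B⁻¹ * Aᵀ * S (k + 1) * mpinv ((S (k + 1))ᵀ * A * B⁻¹ * Aᵀ * S (k + 1)) * (S (k + 1))ᵀ)
          *ᵥ (A *ᵥ (x k - xstar))) := by rw [hxsub, mulVec_sub]
    _ = y k - (Bhalf *
        (B⁻¹ * Aᵀ * S (k + 1) * mpinv ((S (k + 1))ᵀ * A * B⁻¹ * Aᵀ * S (k + 1)) * (S (k + 1))ᵀ)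
          * A * Bhalf⁻¹) *ᵥ y k := by
      rw [← hydef k]
      congr 1
      conv_lhs => rw [hu]
      simp only [mulVec_mulVec]
      congr 1
      simp only [Matrix.mul_assoc]
    _ = y k - Pm (k + 1) *ᵥ y k := by
      rw [conj_identity A B Bhalf (S (k + 1)) hBinv hBhinvT hBhmul, hPmdef, hWdef]
  -- basic projection facts
  have hPs : ∀ k, (Pm k)ᵀ = Pm k := by
    intro k; rw [hPmdef k]; exact projP_symm (W k)
  have hPi : ∀ k, Pm k * Pm k = Pm k := by
    intro k; rw [hPmdef k]; exact projP_idem (W k)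
  have hdotstep : ∀ k, y (k + 1) ⬝ᵥ y (k + 1) =
      y k ⬝ᵥ y k - (Pm (k + 1) *ᵥ y k) ⬝ᵥ (Pm (k + 1) *ᵥ y k) := by
    intro k
    rw [hyrec k]
    exact proj_dot_eq _ (hPs _) (hPi _) _
  have hmono : ∀ k, y (k + 1) ⬝ᵥ y (k + 1) ≤ y k ⬝ᵥ y k := by
    intro k
    have := dot_self_nonneg (Pm (k + 1) *ᵥ y k)
    rw [hdotstep k]; linarith
  have hmono' : ∀ j k, j ≤ k → y k ⬝ᵥ y k ≤ y j ⬝ᵥ y j := by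
    intro j k hjk
    induction k, hjk using Nat.le_induction with
    | base => exact le_refl _
    | succ k hk ih => exact le_trans (hmono k) ih
  have hprop : ∀ j k, j ≤ k → y j = 0 → y k = 0 := by
    intro j k hjk h0
    have h1 := hmono' j k hjk
    rw [h0] at h1
    simp only [zero_dotProduct] at h1
    exact dotProduct_self_eq_zero.mp (le_antisymm h1 (dot_self_nonneg _))
  -- membership of the iterates in `row(A Bhalf⁻¹)`
  have hVle : ∀ k, colSpace (W k) ≤ rowSpace (A * Bhalf⁻¹) := by
    intro k
    show rowSpace (W k)ᵀ ≤ _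
    rw [hWT k, Matrix.mul_assoc]
    exact rowSpace_mul_le _ _
  have hyV : ∀ k, y k ∈ rowSpace (A * Bhalf⁻¹) := by
    intro k
    induction k with
    | zero =>
      apply mem_of_dot_orth
      intro w hw
      have hrow : (A * Bhalf⁻¹) *ᵥ w = 0 := by
        funext i
        have := hw ((A * Bhalf⁻¹) i) (Submodule.subset_span (Set.mem_range_self i))
        simpa [mulVec, dotProduct] using this
      have hAz : A *ᵥ (Bhalf⁻¹ *ᵥ w) = 0 := by rw [mulVec_mulVec]; exact hrow
      have hBz : Bhalf *ᵥ (Bhalf⁻¹ *ᵥ w) = w := by rw [mulVec_mulVec, hBhmul, one_mulVec]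
      have hy0eq : y 0 = Bhalf *ᵥ (x₀ - xstar) := by rw [hydef 0, hx0]
      have hQt : ∀ t : ℝ, (y 0) ⬝ᵥ (y 0) ≤ (y 0 - t • w) ⬝ᵥ (y 0 - t • w) := by
        intro t
        have hsolz : A *ᵥ (xstar + t • (Bhalf⁻¹ *ᵥ w)) = b := by
          rw [mulVec_add, mulVec_smul, hAz, smul_zero, add_zero, hsol]
        have h := hproj (xstar + t • (Bhalf⁻¹ *ᵥ w)) hsolz
        have hxy : Bhalf *ᵥ (x₀ - (xstar + t • (Bhalf⁻¹ *ᵥ w))) = y 0 - t • w := by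
          have hsub : x₀ - (xstar + t • (Bhalf⁻¹ *ᵥ w)) =
              (x₀ - xstar) - t • (Bhalf⁻¹ *ᵥ w) := by abel
          rw [hsub, mulVec_sub, mulVec_smul, hBz, ← hy0eq]
        rw [hxy, ← hy0eq] at h
        have h2 := pow_le_pow_left₀ (nrm2_nonneg _) h 2
        rwa [nrm2_sq, nrm2_sq] at h2
      by_cases hw0 : w = 0
      · rw [hw0, dotProduct_zero]
      · have hww : 0 < w ⬝ᵥ w := by
          rcases lt_or_eq_of_le (dot_self_nonneg w) with h' | h'
          · exact h'
          · exact absurd (dotProduct_self_eq_zero.mp h'.symm) hw0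
        have hne := ne_of_gt hww
        have hexp := hQt (((y 0) ⬝ᵥ w) / (w ⬝ᵥ w))
        have hexpand : ∀ t : ℝ, (y 0 - t • w) ⬝ᵥ (y 0 - t • w)
            = (y 0) ⬝ᵥ (y 0) - 2 * t * ((y 0) ⬝ᵥ w) + t ^ 2 * (w ⬝ᵥ w) := by
          intro t
          simp only [sub_dotProduct, dotProduct_sub, smul_dotProduct, dotProduct_smul,
            smul_eq_mul]
          rw [dotProduct_comm w (y 0)]
          ring
        rw [hexpand] at hexp
        have hcs : ((y 0) ⬝ᵥ w / (w ⬝ᵥ w)) * (w ⬝ᵥ w) = (y 0) ⬝ᵥ w :=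
          div_mul_cancel₀ _ hne
        have hA : 0 ≤ -2 * ((y 0) ⬝ᵥ w / (w ⬝ᵥ w)) * ((y 0) ⬝ᵥ w)
            + ((y 0) ⬝ᵥ w / (w ⬝ᵥ w)) ^ 2 * (w ⬝ᵥ w) := by linarith [hexp]
        have hC : ((y 0) ⬝ᵥ w / (w ⬝ᵥ w)) ^ 2 * (w ⬝ᵥ w)
            = ((y 0) ⬝ᵥ w / (w ⬝ᵥ w)) * ((y 0) ⬝ᵥ w) := by
          rw [sq, mul_assoc, hcs]
        rw [hC] at hA
        have hD : ((y 0) ⬝ᵥ w / (w ⬝ᵥ w)) * ((y 0) ⬝ᵥ w) ≤ 0 := by linarith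
        have hE : 0 ≤ ((y 0) ⬝ᵥ w / (w ⬝ᵥ w)) * ((y 0) ⬝ᵥ w) := by
          rw [div_mul_eq_mul_div]
          exact div_nonneg (mul_self_nonneg _) (le_of_lt hww)
        have hF : ((y 0) ⬝ᵥ w / (w ⬝ᵥ w)) * ((y 0) ⬝ᵥ w) = 0 := le_antisymm hD hE
        have hG : ((y 0) ⬝ᵥ w) * ((y 0) ⬝ᵥ w) = 0 := by
          calc ((y 0) ⬝ᵥ w) * ((y 0) ⬝ᵥ w)
              = (((y 0) ⬝ᵥ w / (w ⬝ᵥ w)) * ((y 0) ⬝ᵥ w)) * (w ⬝ᵥ w) := by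
                field_simp
            _ = 0 := by rw [hF, zero_mul]
        exact mul_self_eq_zero.mp hG
    | succ k ih =>
      rw [hyrec k]
      refine Submodule.sub_mem _ ih (hVle (k + 1) ?_)
      have hPv : Pm (k + 1) *ᵥ y k =
          W (k + 1) *ᵥ ((mpinv ((W (k + 1))ᵀ * W (k + 1)) * (W (k + 1))ᵀ) *ᵥ y k) := by
        rw [hPmdef (k + 1)]
        simp only [mulVec_mulVec, Matrix.mul_assoc]
      rw [hPv]
      exact mulVec_mem_colSpace _ _
  -- strict contraction over each covering cycle
  have hcycle : ∀ ℓ < L, y (τ ℓ) ≠ 0 →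
      y (τ (ℓ + 1)) ⬝ᵥ y (τ (ℓ + 1)) < y (τ ℓ) ⬝ᵥ y (τ ℓ) := by
    intro ℓ hℓ hy0
    by_contra hge
    push_neg at hge
    have hconst : ∀ k, τ ℓ ≤ k → k ≤ τ (ℓ + 1) → y k ⬝ᵥ y k = y (τ ℓ) ⬝ᵥ y (τ ℓ) := by
      intro k h1 h2
      exact le_antisymm (hmono' _ _ h1) (le_trans hge (hmono' _ _ h2))
    have hP0 : ∀ k', τ ℓ ≤ k' → k' + 1 ≤ τ (ℓ + 1) → Pm (k' + 1) *ᵥ y k' = 0 := by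
      intro k' h1 h2
      have hdots : y (k' + 1) ⬝ᵥ y (k' + 1) = y k' ⬝ᵥ y k' := by
        rw [hconst (k' + 1) (le_trans h1 (Nat.le_succ _)) h2,
          hconst k' h1 (le_trans (Nat.le_succ _) h2)]
      have hds := hdotstep k'
      rw [hdots] at hds
      have : (Pm (k' + 1) *ᵥ y k') ⬝ᵥ (Pm (k' + 1) *ᵥ y k') = 0 := by linarith
      exact dotProduct_self_eq_zero.mp this
    have hyeq : ∀ K, τ ℓ ≤ K → K ≤ τ (ℓ + 1) → y K = y (τ ℓ) := by
      intro K hK1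
      induction K, hK1 using Nat.le_induction with
      | base => intro _; rfl
      | succ k hk ih =>
        intro hk2
        have hk2' : k ≤ τ (ℓ + 1) := Nat.le_of_succ_le hk2
        rw [hyrec k, hP0 k hk hk2, sub_zero, ih hk2']
    have hWt0 : ∀ k, τ ℓ < k → k ≤ τ (ℓ + 1) → (W k)ᵀ *ᵥ y (τ ℓ) = 0 := by
      intro k h1 h2
      cases k with
      | zero => omega
      | succ k' =>
        have hk'1 : τ ℓ ≤ k' := Nat.lt_succ_iff.mp h1
        have hk'2 : k' ≤ τ (ℓ + 1) := le_trans (Nat.le_succ k') h2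
        have h3 : y k' = y (τ ℓ) := hyeq k' hk'1 hk'2
        have hP := hP0 k' hk'1 h2
        rw [← h3]
        calc (W (k' + 1))ᵀ *ᵥ y k'
            = ((W (k' + 1))ᵀ * Pm (k' + 1)) *ᵥ y k' := by
              rw [hPmdef (k' + 1), projP_WtP]
          _ = (W (k' + 1))ᵀ *ᵥ (Pm (k' + 1) *ᵥ y k') := by rw [mulVec_mulVec]
          _ = 0 := by rw [hP, mulVec_zero]
    -- the fixed vector is orthogonal to the whole row space, hence zero
    set f : (Fin n → ℝ) →ₗ[ℝ] ℝ :=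
      { toFun := fun v => v ⬝ᵥ y (τ ℓ),
        map_add' := fun a b' => add_dotProduct a b' _,
        map_smul' := fun c a => smul_dotProduct c a _ } with hf
    have hVker : rowSpace (A * Bhalf⁻¹) ≤ LinearMap.ker f := by
      rw [← hτ ℓ hℓ]
      refine iSup₂_le fun i hi => ?_
      rw [hQspan i, ← hWT i]
      intro v hv
      have := dot_rowSpace_eq_zero (hWt0 i (by
        have := Finset.mem_Icc.mp hi; omega) (Finset.mem_Icc.mp hi).2) v hv
      simpa [hf, LinearMap.mem_ker] using this
    have hker := hVker (hyV (τ ℓ))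
    rw [LinearMap.mem_ker] at hker
    have : y (τ ℓ) ⬝ᵥ y (τ ℓ) = 0 := hker
    exact hy0 (dotProduct_self_eq_zero.mp this)
  -- assemble the contraction factors
  obtain ⟨γ, hγdef⟩ : ∃ γ : ℕ → ℝ,
      ∀ l, γ l = max (nrm2 (y (τ l)) / nrm2 (y (τ (l - 1)))) (1 / 2) := ⟨_, fun _ => rfl⟩
  have hγpos : ∀ l, 0 < γ l := by
    intro l
    rw [hγdef l]
    exact lt_of_lt_of_le (by norm_num) (le_max_right _ _)
  refine ⟨γ, ?_, ?_⟩
  · intro l hmem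
    rw [Finset.mem_Icc] at hmem
    refine ⟨hγpos l, ?_⟩
    rw [hγdef l]
    apply max_lt _ (by norm_num)
    by_cases h0 : y (τ (l - 1)) = 0
    · rw [h0, (nrm2_eq_zero_iff (0 : Fin n → ℝ)).mpr rfl, div_zero]
      norm_num
    · have hden : 0 < nrm2 (y (τ (l - 1))) := by
        rcases lt_or_eq_of_le (nrm2_nonneg (y (τ (l - 1)))) with h' | h'
        · exact h'
        · exact absurd ((nrm2_eq_zero_iff _).mp h'.symm) h0
      rw [div_lt_one hden]
      apply nrm2_lt_of_dot_lt
      have := hcycle (l - 1) (by omega) h0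
      rwa [Nat.sub_add_cancel hmem.1] at this
  · have claim : ∀ l, l ≤ L →
        nrm2 (y (τ l)) ≤ (∏ j ∈ Finset.Icc 1 l, γ j) * nrm2 (y 0) := by
      intro l
      induction l with
      | zero =>
        intro _
        simp [hτ0]
      | succ l ih =>
        intro hL
        have hL' : l ≤ L := Nat.le_of_succ_le hL
        have ihh := ih hL'
        have hprodnn : (0 : ℝ) ≤ ∏ j ∈ Finset.Icc 1 (l + 1), γ j :=
          Finset.prod_nonneg fun j _ => le_of_lt (hγpos j)
        have hprod : ∏ j ∈ Finset.Icc 1 (l + 1), γ j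
            = (∏ j ∈ Finset.Icc 1 l, γ j) * γ (l + 1) :=
          Finset.prod_Icc_succ_top (by omega) γ
        by_cases h0 : y (τ l) = 0
        · have hz : y (τ (l + 1)) = 0 :=
            hprop (τ l) (τ (l + 1)) (le_of_lt (hτmono l (by omega))) h0
          rw [hz, (nrm2_eq_zero_iff (0 : Fin n → ℝ)).mpr rfl]
          exact mul_nonneg hprodnn (nrm2_nonneg _)
        · have hpos : 0 < nrm2 (y (τ l)) := by
            rcases lt_or_eq_of_le (nrm2_nonneg (y (τ l))) with h' | h'
            · exact h'
            · exact absurd ((nrm2_eq_zero_iff _).mp h'.symm) h0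
          have hratio : nrm2 (y (τ (l + 1))) / nrm2 (y (τ l)) ≤ γ (l + 1) := by
            rw [hγdef (l + 1)]
            simp only [Nat.add_sub_cancel]
            exact le_max_left _ _
          have h1 : nrm2 (y (τ (l + 1))) ≤ γ (l + 1) * nrm2 (y (τ l)) := by
            rw [div_le_iff₀ hpos] at hratio
            linarith
          calc nrm2 (y (τ (l + 1))) ≤ γ (l + 1) * nrm2 (y (τ l)) := h1
          _ ≤ γ (l + 1) * ((∏ j ∈ Finset.Icc 1 l, γ j) * nrm2 (y 0)) :=
              mul_le_mul_of_nonneg_left ihh (le_of_lt (hγpos _))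
          _ = (∏ j ∈ Finset.Icc 1 (l + 1), γ j) * nrm2 (y 0) := by
              rw [hprod]; ring
    have hfin := claim L le_rfl
    rw [hydef (τ L), hydef 0, hx0] at hfin
    exact hfin

end
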